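/- Let L be an even positive integer, let A be the set of vectors in {0,1}^L having exactly L/2 coordinates equal to 1, and let g : A → A be an arbitrary function. Then there exist a dimension K, a positive integer m, a monotone map F : {0,1}^K → {0,1}^K, and pairwise distinct coordinates a_1,...,a_L, d_1, d_2 (the inputs) and c_1,...,c_L (the outputs) such that: (i) in the dependency digraph of F every vertex has indegree at most 2 and outdegree at most 2, every input coordinate has indegree 0, and every output coordinate has outdegree 0; (ii) for every trajectory x(0), x(1), x(2), ... with externally driven inputs (i.e. satisfying x(t+1)_j = F(x(t))_j for every non-input coordinate j and every t) and every time t at which (x(t)_{a_1},...,x(t)_{a_L}) ∈ A: if (x(t)_{d_1}, x(t)_{d_2}) = (0,1) then (x(t+m)_{c_1},...,x(t+m)_{c_L}) = (x(t)_{a_1},...,x(t)_{a_L}), and if (x(t)_{d_1}, x(t)_{d_2}) = (1,0) then (x(t+m)_{c_1},...,x(t+m)_{c_L}) = g(x(t)_{a_1},...,x(t)_{a_L}). -/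

import Mathlib

/-- Arc `i → j` in the dependency digraph of a Boolean map
`F : {0,1}^K → {0,1}^K`. -/
def BNarc {K : ℕ} (F : (Fin K → Bool) → (Fin K → Bool)) (i j : Fin K) : Prop :=
  ∃ s r : Fin K → Bool, (∀ k, k ≠ i → s k = r k) ∧ s i < r i ∧ F s j < F r j

/-- Membership in the antichain `A`: exactly `L/2` coordinates equal `1`. -/
def inA {L : ℕ} (v : Fin L → Bool) : Prop :=
  (Finset.univ.filter fun i => v i = true).card = L / 2

inductive BGate (R : Type) where
  | gand : R → R → BGate R
  | gor : R → R → BGate R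
  | gid : R → BGate R
  | gT | gF
deriving DecidableEq

namespace BGate
def eval {R} : BGate R → (R → Bool) → Bool
  | gand s t, f => f s && f t
  | gor s t, f => f s || f t
  | gid s, f => f s
  | gT, _ => true
  | gF, _ => false

def reads {R} : BGate R → Set R
  | gand s t => {s, t}
  | gor s t => {s, t}
  | gid s => {s}
  | _ => ∅

lemma eval_congr {R} (G : BGate R) {f g : R → Bool} (h : ∀ u ∈ G.reads, f u = g u) :
    G.eval f = G.eval g := by
  cases G <;> simp_all [eval, reads]

lemma eval_mono {R} (G : BGate R) {f g : R → Bool} (h : f ≤ g) :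
    G.eval f ≤ G.eval g := by
  cases G with
  | gand s t =>
    have hs := h s; have ht := h t
    simp only [eval]; revert hs ht
    cases f s <;> cases f t <;> cases g s <;> cases g t <;> simp_all [Bool.le_iff_imp]
  | gor s t =>
    have hs := h s; have ht := h t
    simp only [eval]; revert hs ht
    cases f s <;> cases f t <;> cases g s <;> cases g t <;> simp_all [Bool.le_iff_imp]
  | gid s => exact h s
  | gT => exact le_refl _
  | gF => exact Bool.false_le _
end BGate

inductive Role (L N : ℕ) where
  | ia : Fin L → Role L N
  | rd1 : Role L N
  | rd2 : Role L N
  | mint : Fin N → Role L N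
  | fout : Fin L → Role L N
  | qd : Fin L → Role L N
  | pd : Fin L → Role L N
  | outR : Fin L → Role L N
deriving DecidableEq, Fintype


def GArc {α : Type} (F : (α → Bool) → (α → Bool)) (i j : α) : Prop :=
  ∃ s r : α → Bool, (∀ k, k ≠ i → s k = r k) ∧ s i < r i ∧ F s j < F r j


section CKT
variable {L N : ℕ} (vs gi : Fin N → Fin L → Bool)
open Role BGate

/-- the gate computing node `(l+1, w)` from layer `l`. -/
def gate (l : ℕ) : Role L N → BGate (Role L N)
  | ia j => gid (ia j)
  | rd1 => gid rd1
  | rd2 => gid rd2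
  | mint v =>
      if h : (v : ℕ) + 1 ≤ l ∧ l ≤ (v : ℕ) + L then
        (if vs v ⟨l - (v : ℕ) - 1, by omega⟩ then gand (mint v) (ia ⟨l - (v:ℕ) - 1, by omega⟩)
         else gid (mint v))
      else if l < (v : ℕ) + 1 then gT else gid (mint v)
  | fout i =>
      if h : N + L + 1 + (i : ℕ) ≤ l ∧ l < N + L + 1 + (i : ℕ) + N then
        (if gi ⟨l - (N + L + 1 + (i : ℕ)), by omega⟩ i then
            gor (fout i) (mint ⟨l - (N + L + 1 + (i : ℕ)), by omega⟩)
         else gid (fout i))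
      else if l < N + L + 1 + (i : ℕ) then gF else gid (fout i)
  | qd i =>
      if l = N + L + 1 + N + (i : ℕ) then gand rd1 (fout i)
      else if l < N + L + 1 + N + (i : ℕ) then gF else gid (qd i)
  | pd i =>
      if l = N + L + 1 + N + (i : ℕ) then gand rd2 (ia i)
      else if l < N + L + 1 + N + (i : ℕ) then gF else gid (pd i)
  | outR i =>
      if l = N + L + 1 + N + (i : ℕ) + 1 then gor (qd i) (pd i)
      else if l < N + L + 1 + N + (i : ℕ) + 1 then gF else gid (outR i)

def mm (L N : ℕ) : ℕ := 2 * N + 2 * L + 3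

abbrev Node (L N : ℕ) := Fin (mm L N + 1) × Role L N

def step (x : Node L N → Bool) : Node L N → Bool :=
  fun p =>
    if h : 0 < (p.1 : ℕ) then
      (gate vs gi ((p.1 : ℕ) - 1) p.2).eval (fun u => x (⟨(p.1 : ℕ) - 1, by omega⟩, u))
    else false

end CKT
lemma garc_mem {α : Type} (F : (α → Bool) → (α → Bool)) (j : α) (T : Set α)
    (hT : ∀ s r, (∀ k ∈ T, s k = r k) → F s j = F r j) :
    ∀ i, GArc F i j → i ∈ T := by
  intro i h
  by_contra hi
  obtain ⟨s, r, hk, _, hF⟩ := h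
  exact absurd (hT s r fun k hk' => hk k (fun he => hi (he ▸ hk'))) (ne_of_lt hF)

lemma ncard_le_two_of_subset_pair {α : Type} {s : Set α} {a b : α} (h : s ⊆ {a, b}) :
    s.ncard ≤ 2 := by
  refine le_trans (Set.ncard_le_ncard h (Set.toFinite _)) ?_
  refine le_trans (Set.ncard_insert_le a {b}) ?_
  simp [Set.ncard_singleton]

namespace BGate
def src1 {R : Type} (d : R) : BGate R → R
  | gand s _ => s | gor s _ => s | gid s => s | _ => d
def src2 {R : Type} (d : R) : BGate R → R
  | gand _ t => t | gor _ t => t | gid s => s | _ => d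
lemma reads_subset_pair {R : Type} (G : BGate R) (d : R) :
    G.reads ⊆ {G.src1 d, G.src2 d} := by
  cases G <;> simp [reads, src1, src2]
end BGate

section CKT2
variable {L N : ℕ} (vs gi : Fin N → Fin L → Bool)
open Role BGate

lemma garc_step {p i : Node L N} (h : GArc (step vs gi) i p) :
    0 < (p.1 : ℕ) ∧ (i.1 : ℕ) = (p.1 : ℕ) - 1 ∧
      i.2 ∈ (gate vs gi ((p.1 : ℕ) - 1) p.2).reads := by
  by_cases hp : 0 < (p.1 : ℕ)
  · have := garc_mem (step vs gi) p
      {q : Node L N | (q.1 : ℕ) = (p.1 : ℕ) - 1 ∧ q.2 ∈ (gate vs gi ((p.1 : ℕ) - 1) p.2).reads}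
      (fun s r hsr => by
        simp only [step, dif_pos hp]
        exact BGate.eval_congr _ (fun u hu => hsr _ ⟨rfl, hu⟩)) i h
    exact ⟨hp, this.1, this.2⟩
  · exfalso
    obtain ⟨s, r, _, _, hF⟩ := h
    simp only [step, dif_neg hp] at hF
    exact absurd hF (lt_irrefl false)

/-- candidate non-chain reader of role `u` from layer `l`. -/
def rdr2 (l : ℕ) : Role L N → Role L N
  | ia j => if h : l - ((j : ℕ) + 1) < N then mint ⟨l - ((j : ℕ) + 1), h⟩ else pd j
  | rd1 => if h : l - (N + L + 1 + N) < L then qd ⟨l - (N + L + 1 + N), h⟩ else rd1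
  | rd2 => if h : l - (N + L + 1 + N) < L then pd ⟨l - (N + L + 1 + N), h⟩ else rd2
  | mint v => if h : l - (N + L + 1 + (v : ℕ)) < L then fout ⟨l - (N + L + 1 + (v : ℕ)), h⟩
              else mint v
  | fout i => qd i
  | qd i => outR i
  | pd i => outR i
  | outR i => outR i

lemma reader_cases (l : ℕ) (u w : Role L N) (h : u ∈ (gate vs gi l w).reads) :
    w = u ∨ w = rdr2 l u := by
  cases w with
  | ia j => simp only [gate, reads, Set.mem_singleton_iff] at h; subst h; left; rfl
  | rd1 => simp only [gate, reads, Set.mem_singleton_iff] at h; subst h; left; rfl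
  | rd2 => simp only [gate, reads, Set.mem_singleton_iff] at h; subst h; left; rfl
  | mint v =>
    simp only [gate] at h
    split at h
    · rename_i hl
      split at h
      · simp only [reads, Set.mem_insert_iff, Set.mem_singleton_iff] at h
        rcases h with h | h
        · subst h; left; rfl
        · subst h
          right
          simp only [rdr2]
          have hv : l - ((l - (v : ℕ) - 1) + 1) = (v : ℕ) := by omega
          rw [dif_pos (by omega)]
          congr 1
          exact Fin.ext (by simp [hv])
      · simp only [reads, Set.mem_singleton_iff] at h; subst h; left; rfl
    · split at h
      · simp [reads] at h
      · simp only [reads, Set.mem_singleton_iff] at h; subst h; left; rfl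
  | fout i =>
    simp only [gate] at h
    split at h
    · rename_i hl
      split at h
      · simp only [reads, Set.mem_insert_iff, Set.mem_singleton_iff] at h
        rcases h with h | h
        · subst h; left; rfl
        · subst h
          right
          simp only [rdr2]
          rw [dif_pos (by omega)]
          congr 1
          exact Fin.ext (by simp; omega)
      · simp only [reads, Set.mem_singleton_iff] at h; subst h; left; rfl
    · split at h
      · simp [reads] at h
      · simp only [reads, Set.mem_singleton_iff] at h; subst h; left; rfl
  | qd i =>
    simp only [gate] at h
    split at h
    · rename_i hl
      simp only [reads, Set.mem_insert_iff, Set.mem_singleton_iff] at h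
      rcases h with h | h
      · subst h
        right
        simp only [rdr2]
        rw [dif_pos (by omega)]
        congr 1
        exact Fin.ext (by simp; omega)
      · subst h; right; rfl
    · split at h
      · simp [reads] at h
      · simp only [reads, Set.mem_singleton_iff] at h; subst h; left; rfl
  | pd i =>
    simp only [gate] at h
    split at h
    · rename_i hl
      simp only [reads, Set.mem_insert_iff, Set.mem_singleton_iff] at h
      rcases h with h | h
      · subst h
        right
        simp only [rdr2]
        rw [dif_pos (by omega)]
        congr 1
        exact Fin.ext (by simp; omega)
      · subst h
        right
        simp only [rdr2]
        rw [dif_neg (by omega)]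
    · split at h
      · simp [reads] at h
      · simp only [reads, Set.mem_singleton_iff] at h; subst h; left; rfl
  | outR i =>
    simp only [gate] at h
    split at h
    · simp only [reads, Set.mem_insert_iff, Set.mem_singleton_iff] at h
      rcases h with h | h <;> (subst h; right; rfl)
    · split at h
      · simp [reads] at h
      · simp only [reads, Set.mem_singleton_iff] at h; subst h; left; rfl

end CKT2
section CKT3
variable {L N : ℕ} (vs gi : Fin N → Fin L → Bool)
open Role BGate

lemma step_mono : Monotone (step vs gi) := by
  intro x y h p
  simp only [step]
  split
  · exact BGate.eval_mono _ (fun u => h _)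
  · exact le_refl _

lemma indeg_pair (p : Node L N) :
    ∃ A B : Node L N, {i : Node L N | GArc (step vs gi) i p} ⊆ {A, B} := by
  have hlt : (p.1 : ℕ) - 1 < mm L N + 1 := by have := p.1.isLt; omega
  refine ⟨(⟨(p.1 : ℕ) - 1, hlt⟩, (gate vs gi ((p.1 : ℕ) - 1) p.2).src1 rd1),
          (⟨(p.1 : ℕ) - 1, hlt⟩, (gate vs gi ((p.1 : ℕ) - 1) p.2).src2 rd1), ?_⟩
  intro i hi
  obtain ⟨h0, h1, h2⟩ := garc_step vs gi hi
  have := BGate.reads_subset_pair (gate vs gi ((p.1 : ℕ) - 1) p.2) rd1 h2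
  rcases this with h | h
  · left; exact Prod.ext (Fin.ext h1) h
  · right; exact Prod.ext (Fin.ext h1) h

lemma outdeg_pair (q : Node L N) :
    ∃ A B : Node L N, {p : Node L N | GArc (step vs gi) q p} ⊆ {A, B} := by
  by_cases hq : (q.1 : ℕ) + 1 ≤ mm L N
  · refine ⟨(⟨(q.1 : ℕ) + 1, by omega⟩, q.2), (⟨(q.1 : ℕ) + 1, by omega⟩, rdr2 (q.1 : ℕ) q.2), ?_⟩
    intro p hp
    obtain ⟨h0, h1, h2⟩ := garc_step vs gi hp
    have hp1 : (p.1 : ℕ) = (q.1 : ℕ) + 1 := by omega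
    have h2' : q.2 ∈ (gate vs gi (q.1 : ℕ) p.2).reads := by
      rw [show (q.1 : ℕ) = (p.1 : ℕ) - 1 by omega]; exact h2
    rcases reader_cases vs gi (q.1 : ℕ) q.2 p.2 h2' with h | h
    · left; exact Prod.ext (Fin.ext hp1) h
    · right; exact Prod.ext (Fin.ext hp1) h
  · refine ⟨q, q, ?_⟩
    intro p hp
    obtain ⟨h0, h1, h2⟩ := garc_step vs gi hp
    exfalso
    have := p.1.isLt
    omega

lemma no_in_layer0 (w : Role L N) (i : Node L N) :
    ¬ GArc (step vs gi) i (⟨0, by omega⟩, w) := by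
  intro h
  obtain ⟨h0, -, -⟩ := garc_step vs gi h
  simp at h0

lemma no_out_last (w : Role L N) (k : Node L N) :
    ¬ GArc (step vs gi) (⟨mm L N, by omega⟩, w) k := by
  intro h
  obtain ⟨h0, h1, -⟩ := garc_step vs gi h
  have := k.1.isLt
  simp at h1
  omega

def val (v0 : Role L N → Bool) : ℕ → Role L N → Bool
  | 0, w => v0 w
  | l + 1, w => (gate vs gi l w).eval (val v0 l)

lemma val_succ (v0 : Role L N → Bool) (l : ℕ) (w : Role L N) :
    val vs gi v0 (l + 1) w = (gate vs gi l w).eval (val vs gi v0 l) := rfl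

lemma val_ia (v0 : Role L N → Bool) (j : Fin L) : ∀ l, val vs gi v0 l (ia j) = v0 (ia j) := by
  intro l
  induction l with
  | zero => rfl
  | succ l ih => rw [val_succ]; exact ih

lemma val_rd1 (v0 : Role L N → Bool) : ∀ l, val vs gi v0 l rd1 = v0 rd1 := by
  intro l
  induction l with
  | zero => rfl
  | succ l ih => rw [val_succ]; exact ih

lemma val_rd2 (v0 : Role L N → Bool) : ∀ l, val vs gi v0 l rd2 = v0 rd2 := by
  intro l
  induction l with
  | zero => rfl
  | succ l ih => rw [val_succ]; exact ih

end CKT3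
section CKT4
variable {L N : ℕ} (vs gi : Fin N → Fin L → Bool) (v0 : Role L N → Bool)
open Role BGate

def MV (v : Fin N) (l : ℕ) : Bool :=
  decide (∀ j : Fin L, (j : ℕ) + (v : ℕ) + 1 < l → vs v j = true → v0 (ia j) = true)

def Ev (v : Fin N) : Bool := decide (∀ j : Fin L, vs v j = true → v0 (ia j) = true)

def FV (i : Fin L) (l : ℕ) : Bool :=
  decide (∃ v : Fin N, (v : ℕ) + (N + L + 1 + (i : ℕ)) + 1 ≤ l ∧ gi v i = true ∧
    ∀ j : Fin L, vs v j = true → v0 (ia j) = true)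

def GG (i : Fin L) : Bool :=
  decide (∃ v : Fin N, gi v i = true ∧ ∀ j : Fin L, vs v j = true → v0 (ia j) = true)

lemma MV_final (v : Fin N) (l : ℕ) (hl : (v : ℕ) + L + 1 ≤ l) : MV vs v0 v l = Ev vs v0 v := by
  apply decide_eq_decide.mpr
  constructor
  · intro h j hj
    exact h j (by have := j.isLt; omega) hj
  · intro h j _ hj
    exact h j hj

lemma val_mint (v : Fin N) : ∀ l, 1 ≤ l → val vs gi v0 l (mint v) = MV vs v0 v l := by
  intro l
  induction l with
  | zero => omega
  | succ l ih =>
    intro _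
    rw [val_succ]
    simp only [gate]
    by_cases hc : (v : ℕ) + 1 ≤ l ∧ l ≤ (v : ℕ) + L
    · rw [dif_pos hc]
      have hl1 : 1 ≤ l := by omega
      by_cases hv : vs v (⟨l - (v : ℕ) - 1, by omega⟩ : Fin L) = true
      · rw [if_pos hv]
        simp only [BGate.eval]
        rw [ih hl1, val_ia]
        cases hA : v0 (ia (⟨l - (v : ℕ) - 1, by omega⟩ : Fin L)) with
        | false =>
          rw [Bool.and_false]
          symm
          apply decide_eq_false
          intro hall
          have := hall ⟨l - (v : ℕ) - 1, by omega⟩ (by simp; omega) hv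
          rw [hA] at this
          exact Bool.false_ne_true this
        | true =>
          rw [Bool.and_true]
          apply decide_eq_decide.mpr
          constructor
          · intro hall j hj' hvj
            by_cases hjl : (j : ℕ) + (v : ℕ) + 1 < l
            · exact hall j hjl hvj
            · have : j = (⟨l - (v : ℕ) - 1, by omega⟩ : Fin L) := Fin.ext (by simp; omega)
              rw [this, hA]
          · intro hall j hj' hvj
            exact hall j (by omega) hvj
      · rw [if_neg hv]
        simp only [BGate.eval]
        rw [ih hl1]
        apply decide_eq_decide.mpr
        constructor
        · intro hall j hj' hvj
          by_cases hjl : (j : ℕ) + (v : ℕ) + 1 < l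
          · exact hall j hjl hvj
          · exfalso
            have : j = (⟨l - (v : ℕ) - 1, by omega⟩ : Fin L) := Fin.ext (by simp; omega)
            rw [this] at hvj
            exact hv hvj
        · intro hall j hj' hvj
          exact hall j (by omega) hvj
    · rw [dif_neg hc]
      by_cases hl0 : l < (v : ℕ) + 1
      · rw [if_pos hl0]
        simp only [BGate.eval]
        symm
        apply decide_eq_true
        intro j hj
        omega
      · rw [if_neg hl0]
        simp only [BGate.eval]
        rw [ih (by omega)]
        apply decide_eq_decide.mpr
        constructor
        · intro hall j hj' hvj
          have := j.isLt
          exact hall j (by omega) hvj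
        · intro hall j hj' hvj
          exact hall j (by omega) hvj

lemma val_fout (i : Fin L) : ∀ l, 1 ≤ l → val vs gi v0 l (fout i) = FV vs gi v0 i l := by
  intro l
  induction l with
  | zero => omega
  | succ l ih =>
    intro _
    rw [val_succ]
    simp only [gate]
    by_cases hc : N + L + 1 + (i : ℕ) ≤ l ∧ l < N + L + 1 + (i : ℕ) + N
    · rw [dif_pos hc]
      have hl1 : 1 ≤ l := by omega
      set v₀ : Fin N := ⟨l - (N + L + 1 + (i : ℕ)), by omega⟩ with hv₀
      by_cases hg : gi v₀ i = true
      · rw [if_pos hg]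
        simp only [BGate.eval]
        rw [ih hl1, val_mint vs gi v0 v₀ l hl1, MV_final vs v0 v₀ l (by simp [hv₀]; omega)]
        cases hE : Ev vs v0 v₀ with
        | true =>
          rw [Bool.or_true]
          symm
          apply decide_eq_true
          exact ⟨v₀, by simp [hv₀]; omega, hg, of_decide_eq_true hE⟩
        | false =>
          rw [Bool.or_false]
          apply decide_eq_decide.mpr
          constructor
          · rintro ⟨v, h1, h2, h3⟩
            exact ⟨v, by omega, h2, h3⟩
          · rintro ⟨v, h1, h2, h3⟩
            by_cases hvl : (v : ℕ) + (N + L + 1 + (i : ℕ)) + 1 ≤ l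
            · exact ⟨v, hvl, h2, h3⟩
            · exfalso
              have : v = v₀ := Fin.ext (by simp [hv₀]; omega)
              rw [this] at h3
              have := decide_eq_true_iff (p := ∀ j : Fin L, vs v₀ j = true → v0 (ia j) = true)
              rw [show (decide (∀ j : Fin L, vs v₀ j = true → v0 (ia j) = true)) = Ev vs v0 v₀ from rfl] at this
              rw [hE] at this
              exact Bool.false_ne_true (this.mpr h3)
      · rw [if_neg hg]
        simp only [BGate.eval]
        rw [ih hl1]
        apply decide_eq_decide.mpr
        constructor
        · rintro ⟨v, h1, h2, h3⟩
          exact ⟨v, by omega, h2, h3⟩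
        · rintro ⟨v, h1, h2, h3⟩
          by_cases hvl : (v : ℕ) + (N + L + 1 + (i : ℕ)) + 1 ≤ l
          · exact ⟨v, hvl, h2, h3⟩
          · exfalso
            have : v = v₀ := Fin.ext (by simp [hv₀]; omega)
            rw [this] at h2
            exact hg h2
    · rw [dif_neg hc]
      by_cases hl0 : l < N + L + 1 + (i : ℕ)
      · rw [if_pos hl0]
        simp only [BGate.eval]
        symm
        apply decide_eq_false
        rintro ⟨v, h1, -, -⟩
        omega
      · rw [if_neg hl0]
        simp only [BGate.eval]
        rw [ih (by omega)]
        apply decide_eq_decide.mpr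
        constructor
        · rintro ⟨v, h1, h2, h3⟩
          have := v.isLt
          exact ⟨v, by omega, h2, h3⟩
        · rintro ⟨v, h1, h2, h3⟩
          exact ⟨v, by omega, h2, h3⟩

lemma FV_final (i : Fin L) (l : ℕ) (hl : N + L + 1 + (i : ℕ) + N ≤ l) :
    FV vs gi v0 i l = GG vs gi v0 i := by
  apply decide_eq_decide.mpr
  constructor
  · rintro ⟨v, -, h2, h3⟩
    exact ⟨v, h2, h3⟩
  · rintro ⟨v, h2, h3⟩
    exact ⟨v, by have := v.isLt; omega, h2, h3⟩

lemma val_qd (i : Fin L) :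
    ∀ l, N + L + 1 + N + (i : ℕ) + 1 ≤ l →
      val vs gi v0 l (qd i) = (v0 rd1 && GG vs gi v0 i) := by
  intro l
  induction l with
  | zero => omega
  | succ l ih =>
    intro hl
    rw [val_succ]
    simp only [gate]
    by_cases hc : l = N + L + 1 + N + (i : ℕ)
    · rw [if_pos hc]
      simp only [BGate.eval]
      rw [val_rd1, val_fout vs gi v0 i l (by omega), hc, FV_final vs gi v0 i _ (by omega)]
    · rw [if_neg hc, if_neg (by omega)]
      simp only [BGate.eval]
      exact ih (by omega)

lemma val_pd (i : Fin L) :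
    ∀ l, N + L + 1 + N + (i : ℕ) + 1 ≤ l →
      val vs gi v0 l (pd i) = (v0 rd2 && v0 (ia i)) := by
  intro l
  induction l with
  | zero => omega
  | succ l ih =>
    intro hl
    rw [val_succ]
    simp only [gate]
    by_cases hc : l = N + L + 1 + N + (i : ℕ)
    · rw [if_pos hc]
      simp only [BGate.eval]
      rw [val_rd2, val_ia]
    · rw [if_neg hc, if_neg (by omega)]
      simp only [BGate.eval]
      exact ih (by omega)

lemma val_outR (i : Fin L) :
    ∀ l, N + L + 1 + N + (i : ℕ) + 2 ≤ l →
      val vs gi v0 l (outR i) = ((v0 rd1 && GG vs gi v0 i) || (v0 rd2 && v0 (ia i))) := by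
  intro l
  induction l with
  | zero => omega
  | succ l ih =>
    intro hl
    rw [val_succ]
    simp only [gate]
    by_cases hc : l = N + L + 1 + N + (i : ℕ) + 1
    · rw [if_pos hc]
      simp only [BGate.eval]
      rw [val_qd vs gi v0 i l (by omega), val_pd vs gi v0 i l (by omega)]
    · rw [if_neg hc, if_neg (by omega)]
      simp only [BGate.eval]
      exact ih (by omega)

end CKT4
open Role BGate

/-- Lemma 3 (module `B`): for any even `L > 0` and any function `g : A → A`
there is a monotone Boolean network with inputs `a_1, …, a_L, d_1, d_2`,
outputs `c_1, …, c_L`, in- and outdegrees at most `2` (inputs of indegree `0`,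
outputs of outdegree `0`), which after a fixed delay `m` outputs `a(t)` when
`d(t) = (0,1)` and `g(a(t))` when `d(t) = (1,0)`, for any trajectory with
externally driven inputs and any `t` with `a(t) ∈ A`. -/
theorem stmt5 (L : ℕ) (hL : 0 < L) (hLeven : Even L)
    (g : (Fin L → Bool) → (Fin L → Bool)) (hg : ∀ v, inA v → inA (g v)) :
    ∃ (K m : ℕ) (F : (Fin K → Bool) → (Fin K → Bool))
      (a : Fin L → Fin K) (d : Fin 2 → Fin K) (c : Fin L → Fin K),
      0 < m ∧ Monotone F ∧
      Function.Injective a ∧ Function.Injective d ∧ Function.Injective c ∧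
      (∀ i j, a i ≠ d j) ∧ (∀ i j, a i ≠ c j) ∧ (∀ i j, d i ≠ c j) ∧
      (∀ j : Fin K, {i : Fin K | BNarc F i j}.ncard ≤ 2) ∧
      (∀ i : Fin K, {j : Fin K | BNarc F i j}.ncard ≤ 2) ∧
      (∀ i, ∀ k, ¬ BNarc F k (a i)) ∧
      (∀ i, ∀ k, ¬ BNarc F k (d i)) ∧
      (∀ i, ∀ k, ¬ BNarc F (c i) k) ∧
      (∀ x : ℕ → Fin K → Bool,
        (∀ (t : ℕ) (j : Fin K), (∀ i, j ≠ a i) → (∀ i, j ≠ d i) →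
          x (t + 1) j = F (x t) j) →
        ∀ t : ℕ, inA (fun i => x t (a i)) →
          ((x t (d 0) = false ∧ x t (d 1) = true) →
            ∀ i, x (t + m) (c i) = x t (a i)) ∧
          ((x t (d 0) = true ∧ x t (d 1) = false) →
            ∀ i, x (t + m) (c i) = g (fun i => x t (a i)) i)) := by
  classical
  haveI : Fintype {v : Fin L → Bool // inA v} := Fintype.ofFinite _
  set N := Fintype.card {v : Fin L → Bool // inA v} with hN
  let eA : Fin N ≃ {v : Fin L → Bool // inA v} := (Fintype.equivFin _).symm
  let vs : Fin N → Fin L → Bool := fun v => (eA v).1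
  let gi : Fin N → Fin L → Bool := fun v i => g (vs v) i
  let e : Node L N ≃ Fin (Fintype.card (Node L N)) := Fintype.equivFin _
  set K := Fintype.card (Node L N) with hK
  let F : (Fin K → Bool) → (Fin K → Bool) :=
    fun x k => step vs gi (fun n => x (e n)) (e.symm k)
  have h0 : (0 : ℕ) < mm L N + 1 := by omega
  have hm : mm L N < mm L N + 1 := by omega
  let a : Fin L → Fin K := fun i => e (⟨0, h0⟩, ia i)
  let d : Fin 2 → Fin K := fun j => if (j : ℕ) = 0 then e (⟨0, h0⟩, rd1) else e (⟨0, h0⟩, rd2)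
  let c : Fin L → Fin K := fun i => e (⟨mm L N, hm⟩, outR i)
  have hd0 : d 0 = e (⟨0, h0⟩, rd1) := by simp [d]
  have hd1 : d 1 = e (⟨0, h0⟩, rd2) := by simp [d]
  have harc : ∀ i j : Fin K, BNarc F i j ↔ GArc (step vs gi) (e.symm i) (e.symm j) := by
    intro i j
    constructor
    · rintro ⟨s, r, hk, hi, hF⟩
      refine ⟨fun n => s (e n), fun n => r (e n), fun k hk' => hk (e k) ?_, ?_, ?_⟩
      · intro hek
        exact hk' (by rw [← hek, Equiv.symm_apply_apply])
      · simpa [Equiv.apply_symm_apply] using hi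
      · exact hF
    · rintro ⟨s, r, hk, hi, hF⟩
      refine ⟨fun k => s (e.symm k), fun k => r (e.symm k), fun k hk' => hk (e.symm k) ?_, hi, ?_⟩
      · intro hek
        exact hk' (e.symm.injective hek)
      · have hs : (fun n => s (e.symm (e n))) = s := funext fun n => by rw [Equiv.symm_apply_apply]
        have hr : (fun n => r (e.symm (e n))) = r := funext fun n => by rw [Equiv.symm_apply_apply]
        show step vs gi (fun n => s (e.symm (e n))) (e.symm j)
          < step vs gi (fun n => r (e.symm (e n))) (e.symm j)
        rw [hs, hr]
        exact hF
  refine ⟨K, mm L N, F, a, d, c, by simp [mm], ?_, ?_, ?_, ?_, ?_, ?_, ?_, ?_, ?_, ?_, ?_, ?_, ?_⟩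
  · -- Monotone
    intro x y h k
    exact step_mono vs gi (fun n => h (e n)) (e.symm k)
  · -- a injective
    intro i j h
    have := e.injective h
    simpa [Prod.ext_iff] using this
  · -- d injective
    intro i j h
    fin_cases i <;> fin_cases j <;> simp_all [d] <;>
      · have := e.injective h; simp [Prod.ext_iff] at this
  · -- c injective
    intro i j h
    have := e.injective h
    simpa [Prod.ext_iff] using this
  · -- a ≠ d
    intro i j h
    fin_cases j <;> simp_all [a, d] <;>
      · have := e.injective h; simp [Prod.ext_iff] at this
  · -- a ≠ c
    intro i j h
    have := e.injective h
    simp [Prod.ext_iff] at this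
  · -- d ≠ c
    intro i j h
    fin_cases i <;> simp_all [d, c] <;>
      · have := e.injective h; simp [Prod.ext_iff] at this
  · -- indegree
    intro j
    obtain ⟨A, B, hAB⟩ := indeg_pair vs gi (e.symm j)
    apply ncard_le_two_of_subset_pair (a := e A) (b := e B)
    intro i hi
    rcases hAB ((harc i j).mp hi) with h | h
    · left; exact (Equiv.symm_apply_eq e).mp h
    · right; exact (Equiv.symm_apply_eq e).mp h
  · -- outdegree
    intro i
    obtain ⟨A, B, hAB⟩ := outdeg_pair vs gi (e.symm i)
    apply ncard_le_two_of_subset_pair (a := e A) (b := e B)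
    intro j hj
    rcases hAB ((harc i j).mp hj) with h | h
    · left; exact (Equiv.symm_apply_eq e).mp h
    · right; exact (Equiv.symm_apply_eq e).mp h
  · -- inputs a: indegree 0
    intro i k hk
    have := (harc k (a i)).mp hk
    rw [show e.symm (a i) = (⟨0, h0⟩, ia i) from e.symm_apply_apply _] at this
    exact no_in_layer0 vs gi (ia i) _ this
  · -- inputs d: indegree 0
    intro i k hk
    have := (harc k (d i)).mp hk
    by_cases hii : (i : ℕ) = 0
    · rw [show d i = e (⟨0, h0⟩, rd1) by simp only [d, hii, ↓reduceIte], e.symm_apply_apply] at this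
      exact no_in_layer0 vs gi rd1 _ this
    · rw [show d i = e (⟨0, h0⟩, rd2) by simp only [d, hii, ↓reduceIte], e.symm_apply_apply] at this
      exact no_in_layer0 vs gi rd2 _ this
  · -- outputs: outdegree 0
    intro i k hk
    have := (harc (c i) k).mp hk
    rw [show e.symm (c i) = (⟨mm L N, hm⟩, outR i) from e.symm_apply_apply _] at this
    exact no_out_last vs gi (outR i) _ this
  · -- trajectories
    intro x hx t hA
    set v0 : Role L N → Bool := fun w => x t (e (⟨0, h0⟩, w)) with hv0
    have hval : ∀ l, l ≤ mm L N → ∀ (hl : l < mm L N + 1) (w : Role L N),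
        x (t + l) (e (⟨l, hl⟩, w)) = val vs gi v0 l w := by
      intro l
      induction l with
      | zero => intro _ _ w; rfl
      | succ l ih =>
        intro hle hl w
        have hstep := hx (t + l) (e (⟨l + 1, hl⟩, w))
          (fun i hi => by
            have := e.injective hi
            simp [a, Prod.ext_iff, Fin.ext_iff] at this)
          (fun i hi => by
            by_cases hii : (i : ℕ) = 0
            · rw [show d i = e (⟨0, h0⟩, rd1) by simp only [d, hii, ↓reduceIte]] at hi
              have := e.injective hi
              simp [Prod.ext_iff, Fin.ext_iff] at this
            · rw [show d i = e (⟨0, h0⟩, rd2) by simp only [d, hii, ↓reduceIte]] at hi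
              have := e.injective hi
              simp [Prod.ext_iff, Fin.ext_iff] at this)
        rw [show t + (l + 1) = (t + l) + 1 from rfl, hstep]
        show step vs gi (fun n => x (t + l) (e n)) (e.symm (e (⟨l + 1, hl⟩, w)))
          = val vs gi v0 (l + 1) w
        rw [e.symm_apply_apply]
        simp only [step]
        rw [dif_pos (show 0 < ((⟨l + 1, hl⟩ : Fin (mm L N + 1)) : ℕ) from Nat.succ_pos l)]
        rw [val_succ]
        apply BGate.eval_congr
        intro u _
        exact ih (by omega) (by omega) u
    have hout : ∀ i : Fin L, x (t + mm L N) (c i)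
        = ((v0 rd1 && GG vs gi v0 i) || (v0 rd2 && v0 (ia i))) := by
      intro i
      rw [show c i = e (⟨mm L N, hm⟩, outR i) from rfl]
      rw [hval (mm L N) le_rfl hm (outR i)]
      exact val_outR vs gi v0 i (mm L N) (by have := i.isLt; simp [mm]; omega)
    have hva : ∀ i : Fin L, v0 (ia i) = x t (a i) := fun i => rfl
    have hvd1 : v0 rd1 = x t (d 0) := by rw [hd0]
    have hvd2 : v0 rd2 = x t (d 1) := by rw [hd1]
    constructor
    · rintro ⟨h1, h2⟩ i
      rw [hout i, ← hva i, hvd1, hvd2, h1, h2]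
      simp
    · rintro ⟨h1, h2⟩ i
      rw [hout i, hvd1, hvd2, h1, h2]
      simp only [Bool.true_and, Bool.false_and, Bool.or_false]
      -- GG = g A i
      set Afun : Fin L → Bool := fun j => x t (a j) with hAfun
      have hAin : inA Afun := hA
      have hv0A : ∀ j, v0 (ia j) = Afun j := fun j => rfl
      have hAv : ∀ v : Fin N, (∀ j, vs v j = true → Afun j = true) → vs v = Afun := by
        intro v hv
        have h1 : (Finset.univ.filter fun j => vs v j = true)
            ⊆ (Finset.univ.filter fun j => Afun j = true) := by
          intro j hj
          simp only [Finset.mem_filter, Finset.mem_univ, true_and] at hj ⊢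
          exact hv j hj
        have h2 : (Finset.univ.filter fun j => Afun j = true).card
            ≤ (Finset.univ.filter fun j => vs v j = true).card := by
          have hc1 : (Finset.univ.filter fun j => vs v j = true).card = L / 2 := (eA v).2
          have hc2 : (Finset.univ.filter fun j => Afun j = true).card = L / 2 := hAin
          omega
        have := Finset.eq_of_subset_of_card_le h1 h2
        funext j
        have hmem : (j ∈ Finset.univ.filter fun j => vs v j = true)
            ↔ (j ∈ Finset.univ.filter fun j => Afun j = true) := by rw [this]
        simp only [Finset.mem_filter, Finset.mem_univ, true_and] at hmem
        cases hvj : vs v j with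
        | true => exact (hmem.mp hvj).symm
        | false =>
          cases hAj : Afun j with
          | false => rfl
          | true =>
            rw [hvj] at hmem
            exact hmem.mpr hAj
      cases hgA : g Afun i with
      | true =>
        apply decide_eq_true
        refine ⟨eA.symm ⟨Afun, hAin⟩, ?_, ?_⟩
        · show g (vs (eA.symm ⟨Afun, hAin⟩)) i = true
          have : vs (eA.symm ⟨Afun, hAin⟩) = Afun := by
            show ((eA (eA.symm ⟨Afun, hAin⟩)) : Fin L → Bool) = Afun
            rw [Equiv.apply_symm_apply]
          rw [this, hgA]
        · intro j hj
          have : vs (eA.symm ⟨Afun, hAin⟩) = Afun := by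
            show ((eA (eA.symm ⟨Afun, hAin⟩)) : Fin L → Bool) = Afun
            rw [Equiv.apply_symm_apply]
          rw [this] at hj
          rw [hv0A j]
          exact hj
      | false =>
        apply decide_eq_false
        rintro ⟨v, h2', h3⟩
        have h3' : ∀ j, vs v j = true → Afun j = true := by
          intro j hj
          rw [← hv0A j]
          exact h3 j hj
        have := hAv v h3'
        rw [show gi v i = g (vs v) i from rfl, this, hgA] at h2'
        exact Bool.false_ne_true h2'
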